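/- For odd k ≥ 5, define Q_u(s) = ((1+k)/6)s³ + ((1−k)/2)s² + ((3k²−7k−4)/6)s − (1−k)k/2. Then Q_u is monotonically increasing on ℝ, Q_u(−1) = 1, and Q_u(−k) = −(1/6)(k⁴ + 7k³ − 13k² − k) < 0. Consequently Q_u(s) ≥ 1 for all real s ≥ −1 and Q_u(s) ≥ −(1/6)(k⁴+7k³−13k²−k) for all s ∈ [−k, k]. -/

import Mathlib

/-- for odd `k ≥ 5`, the univariate polynomial
`Q_u(s) = ((1+k)/6)s³ + ((1−k)/2)s² + ((3k²−7k−4)/6)s − (1−k)k/2`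
is monotonically increasing, `Q_u(−1) = 1`, `Q_u(−k) = −(1/6)(k⁴+7k³−13k²−k) < 0`;
consequently `Q_u(s) ≥ 1` for `s ≥ −1` and `Q_u(s) ≥ −(1/6)(k⁴+7k³−13k²−k)` on `[−k,k]`. -/
theorem thr_univariate_poly (k : ℕ) (hodd : Odd k) (hk : 5 ≤ k) :
    let Qu : ℝ → ℝ := fun s =>
      ((1 + (k:ℝ))/6) * s^3 + ((1 - (k:ℝ))/2) * s^2
        + ((3*(k:ℝ)^2 - 7*(k:ℝ) - 4)/6) * s - (1 - (k:ℝ))*(k:ℝ)/2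
    StrictMono Qu ∧
    Qu (-1) = 1 ∧
    Qu (-(k:ℝ)) = -(1/6) * ((k:ℝ)^4 + 7*(k:ℝ)^3 - 13*(k:ℝ)^2 - (k:ℝ)) ∧
    Qu (-(k:ℝ)) < 0 ∧
    (∀ s : ℝ, -1 ≤ s → 1 ≤ Qu s) ∧
    (∀ s : ℝ, -(k:ℝ) ≤ s → s ≤ (k:ℝ) →
      -(1/6) * ((k:ℝ)^4 + 7*(k:ℝ)^3 - 13*(k:ℝ)^2 - (k:ℝ)) ≤ Qu s) := by
  intro Qu
  have hk5 : (5:ℝ) ≤ (k:ℝ) := by exact_mod_cast hk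
  have hderiv : ∀ s : ℝ, HasDerivAt Qu
      (((1 + (k:ℝ))/6) * (3 * s^2) + ((1 - (k:ℝ))/2) * (2 * s)
        + ((3*(k:ℝ)^2 - 7*(k:ℝ) - 4)/6)) s := by
    intro s
    have h1 : HasDerivAt (fun s : ℝ => s^3) (3 * s^2) s := by
      simpa using hasDerivAt_pow 3 s
    have h2 : HasDerivAt (fun s : ℝ => s^2) (2 * s) s := by
      simpa using hasDerivAt_pow 2 s
    have := (((h1.const_mul ((1 + (k:ℝ))/6)).add
      (h2.const_mul ((1 - (k:ℝ))/2))).add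
      ((hasDerivAt_id s).const_mul ((3*(k:ℝ)^2 - 7*(k:ℝ) - 4)/6))).sub_const
      ((1 - (k:ℝ))*(k:ℝ)/2)
    simpa [mul_one, Qu] using this
  have hpos : ∀ s : ℝ, 0 < ((1 + (k:ℝ))/6) * (3 * s^2) + ((1 - (k:ℝ))/2) * (2 * s)
      + ((3*(k:ℝ)^2 - 7*(k:ℝ) - 4)/6) := by
    intro s
    nlinarith [sq_nonneg (s - 1), sq_nonneg (s - 3/5), sq_nonneg s,
      mul_nonneg (sub_nonneg.2 hk5) (sq_nonneg (s - 1)),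
      mul_nonneg (sub_nonneg.2 hk5) (sub_nonneg.2 hk5)]
  have hmono : StrictMono Qu := by
    apply strictMono_of_deriv_pos
    intro s
    rw [(hderiv s).deriv]
    exact hpos s
  have hneg1 : Qu (-1) = 1 := by
    simp only [Qu]; ring
  have hQk : Qu (-(k:ℝ)) = -(1/6) * ((k:ℝ)^4 + 7*(k:ℝ)^3 - 13*(k:ℝ)^2 - (k:ℝ)) := by
    simp only [Qu]; ring
  have hQkneg : Qu (-(k:ℝ)) < 0 := by
    rw [hQk]; nlinarith [hk5]
  refine ⟨hmono, hneg1, hQk, hQkneg, ?_, ?_⟩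
  · intro s hs
    rcases eq_or_lt_of_le hs with h | h
    · rw [← h, hneg1]
    · exact (hneg1 ▸ (hmono h)).le
  · intro s hs _
    rcases eq_or_lt_of_le hs with h | h
    · rw [← h, hQk]
    · exact (hQk ▸ (hmono h)).le
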